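/- The graph θ(ℓ_1, ..., ℓ_m) with m ≥ 2 and at least 5 vertices is prime if and only if at most one of the lengths ℓ_i equals 2. -/

import Mathlib

variable {V : Type*}

/-- A split of a simple graph. -/
def IsSplit (G : SimpleGraph V) (A B : Set V) : Prop :=
  A ∪ B = Set.univ ∧ Disjoint A B ∧ 2 ≤ A.ncard ∧ 2 ≤ B.ncard ∧
    ∃ A' B', A' ⊆ A ∧ B' ⊆ B ∧ ∀ x ∈ A, ∀ y ∈ B, (G.Adj x y ↔ (x ∈ A' ∧ y ∈ B'))

/-- A graph is prime if it has no split. -/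
def IsPrime (G : SimpleGraph V) : Prop := ¬ ∃ A B : Set V, IsSplit G A B

/-- Local complementation at a vertex. -/
def localComp (G : SimpleGraph V) (v : V) : SimpleGraph V where
  Adj x y := x ≠ y ∧ Xor' (G.Adj x y) (G.Adj v x ∧ G.Adj v y)
  symm := by
    constructor
    intro x y h
    refine ⟨h.1.symm, ?_⟩
    rw [SimpleGraph.adj_comm, and_comm]
    exact h.2
  loopless := by constructor; intro x h; exact h.1 rfl

/-- Pivoting an edge: G ∧ vw = G*v*w*v. -/
def pivot (G : SimpleGraph V) (v w : V) : SimpleGraph V :=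
  localComp (localComp (localComp G v) w) v

/-- Vertex deletion. -/
def deleteVert (G : SimpleGraph V) (v : V) : SimpleGraph {x : V // x ≠ v} :=
  G.induce {x | x ≠ v}

/-- Two vertices are twins if every other vertex is adjacent to one iff to the other. -/
def Twins (G : SimpleGraph V) (u w : V) : Prop :=
  ∀ x, x ≠ u → x ≠ w → (G.Adj x u ↔ G.Adj x w)

/-- Underlying relation of the theta graph: two hub vertices `none` and `some none`,
joined by m internally disjoint paths, the i-th of length ℓ i, with internal vertices
`some (some ⟨i, j⟩)` for j = 0, …, ℓ i − 2. -/
def thetaRel (m : ℕ) (ℓ : Fin m → ℕ) :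
    Option (Option ((i : Fin m) × Fin (ℓ i - 1))) →
      Option (Option ((i : Fin m) × Fin (ℓ i - 1))) → Prop
  | none, some none => ∃ i, ℓ i = 1
  | none, some (some p) => (p.2 : ℕ) = 0
  | some (some p), some none => (p.2 : ℕ) = ℓ p.1 - 2
  | some (some p), some (some q) => p.1 = q.1 ∧ (q.2 : ℕ) = (p.2 : ℕ) + 1
  | _, _ => False

/-- The graph θ(ℓ 0, …, ℓ (m−1)): two specified vertices joined by m internally
disjoint paths of lengths ℓ 0, …, ℓ (m−1). -/
def thetaGraph (m : ℕ) (ℓ : Fin m → ℕ) :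
    SimpleGraph (Option (Option ((i : Fin m) × Fin (ℓ i - 1)))) :=
  SimpleGraph.fromRel (thetaRel m ℓ)

namespace ThetaAux

variable {m : ℕ} {ℓ : Fin m → ℕ}

abbrev TV (m : ℕ) (ℓ : Fin m → ℕ) := Option (Option ((i : Fin m) × Fin (ℓ i - 1)))

def vx : TV m ℓ := none
def vy : TV m ℓ := some none
def vi (i : Fin m) (j : Fin (ℓ i - 1)) : TV m ℓ := some (some ⟨i, j⟩)

lemma vx_ne_vy : (vx : TV m ℓ) ≠ vy := by simp [vx, vy]
lemma vx_ne_vi {i j} : (vx : TV m ℓ) ≠ vi i j := by simp [vx, vi]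
lemma vy_ne_vi {i j} : (vy : TV m ℓ) ≠ vi i j := by simp [vy, vi]

lemma vi_eq_iff {i i' : Fin m} {j : Fin (ℓ i - 1)} {j' : Fin (ℓ i' - 1)} :
    vi i j = vi i' j' ↔ i = i' ∧ (j : ℕ) = (j' : ℕ) := by
  constructor
  · intro h
    simp only [vi, Option.some.injEq] at h
    obtain ⟨h1, h2⟩ := Sigma.mk.inj_iff.mp h
    subst h1
    exact ⟨rfl, congrArg Fin.val (eq_of_heq h2)⟩
  · rintro ⟨h1, h2⟩
    subst h1
    simp [vi, Fin.ext h2]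

lemma adj_xy : (thetaGraph m ℓ).Adj vx vy ↔ ∃ i, ℓ i = 1 := by
  simp [thetaGraph, SimpleGraph.fromRel_adj, vx, vy, thetaRel]

lemma adj_xv {i j} : (thetaGraph m ℓ).Adj vx (vi i j) ↔ (j : ℕ) = 0 := by
  simp [thetaGraph, SimpleGraph.fromRel_adj, vx, vi, thetaRel]

lemma adj_yv {i j} : (thetaGraph m ℓ).Adj vy (vi i j) ↔ (j : ℕ) = ℓ i - 2 := by
  simp [thetaGraph, SimpleGraph.fromRel_adj, vy, vi, thetaRel]

lemma adj_vv {i i' : Fin m} {j : Fin (ℓ i - 1)} {j' : Fin (ℓ i' - 1)} :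
    (thetaGraph m ℓ).Adj (vi i j) (vi i' j') ↔
      i = i' ∧ ((j' : ℕ) = (j : ℕ) + 1 ∨ (j : ℕ) = (j' : ℕ) + 1) := by
  simp only [thetaGraph, SimpleGraph.fromRel_adj, vi, thetaRel, ne_eq, Option.some.injEq]
  constructor
  · rintro ⟨hne, ⟨h1, h2⟩ | ⟨h1, h2⟩⟩
    · exact ⟨h1, Or.inl h2⟩
    · exact ⟨h1.symm, Or.inr h2⟩
  · rintro ⟨h1, h2 | h2⟩
    · subst h1
      refine ⟨?_, Or.inl ⟨rfl, h2⟩⟩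
      intro h; apply Sigma.mk.inj_iff.mp at h
      have := congrArg Fin.val (eq_of_heq h.2); omega
    · subst h1
      refine ⟨?_, Or.inr ⟨rfl, h2⟩⟩
      intro h; apply Sigma.mk.inj_iff.mp at h
      have := congrArg Fin.val (eq_of_heq h.2); omega

lemma nbr_x {b : TV m ℓ} (h : (thetaGraph m ℓ).Adj vx b) :
    b = vy ∨ ∃ i j, b = vi i j ∧ (j : ℕ) = 0 := by
  match b with
  | none => exact absurd h ((thetaGraph m ℓ).loopless.irrefl vx)
  | some none => exact Or.inl rfl
  | some (some ⟨i, j⟩) => exact Or.inr ⟨i, j, rfl, adj_xv.mp h⟩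

lemma nbr_y {b : TV m ℓ} (h : (thetaGraph m ℓ).Adj vy b) :
    b = vx ∨ ∃ i j, b = vi i j ∧ (j : ℕ) = ℓ i - 2 := by
  match b with
  | none => exact Or.inl rfl
  | some none => exact absurd rfl h.ne'
  | some (some ⟨i, j⟩) => exact Or.inr ⟨i, j, rfl, adj_yv.mp h⟩

lemma nbr_v {i : Fin m} {j : Fin (ℓ i - 1)} {b : TV m ℓ}
    (h : (thetaGraph m ℓ).Adj (vi i j) b) :
    (b = vx ∧ (j : ℕ) = 0) ∨ (b = vy ∧ (j : ℕ) = ℓ i - 2) ∨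
      ∃ j', b = vi i j' ∧ ((j' : ℕ) = (j : ℕ) + 1 ∨ (j : ℕ) = (j' : ℕ) + 1) := by
  match b with
  | none => exact Or.inl ⟨rfl, adj_xv.mp h.symm⟩
  | some none => exact Or.inr (Or.inl ⟨rfl, adj_yv.mp h.symm⟩)
  | some (some ⟨i', j'⟩) =>
    obtain ⟨h1, h2⟩ := adj_vv.mp h
    subst h1
    exact Or.inr (Or.inr ⟨j', rfl, h2⟩)

/-- Step in the graph avoiding the vertex `a`. -/
def StepAvoid (a s t : TV m ℓ) : Prop :=
  (thetaGraph m ℓ).Adj s t ∧ s ≠ a ∧ t ≠ a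

lemma stepAvoid_symm {a : TV m ℓ} : Symmetric (StepAvoid a) := by
  rintro s t ⟨h1, h2, h3⟩; exact ⟨h1.symm, h3, h2⟩

/-- Chain avoiding `a`. -/
def ChainAvoid (a : TV m ℓ) : TV m ℓ → TV m ℓ → Prop :=
  Relation.ReflTransGen (StepAvoid a)

lemma chainAvoid_symm {a s t : TV m ℓ} (h : ChainAvoid a s t) : ChainAvoid a t s :=
  by haveI : Std.Symm (StepAvoid a) := ⟨stepAvoid_symm⟩; exact Relation.ReflTransGen.symmetric.symm _ _ h

lemma walk_down {a : TV m ℓ} {i : Fin m} (ha : a ≠ vx) :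
    ∀ j (hj : j < ℓ i - 1), (∀ k (hk : k ≤ j), a ≠ vi i ⟨k, lt_of_le_of_lt hk hj⟩) →
      ChainAvoid a (vi i ⟨j, hj⟩) vx := by
  intro j
  induction j with
  | zero =>
    intro hj hk
    exact Relation.ReflTransGen.single
      ⟨(adj_xv.mpr rfl).symm, (hk 0 le_rfl).symm, ha.symm⟩
  | succ n ih =>
    intro hj hk
    have hn : n < ℓ i - 1 := by omega
    refine Relation.ReflTransGen.head ?_ (ih hn (fun k hk' => hk k (by omega)))
    refine ⟨adj_vv.mpr ⟨rfl, Or.inr rfl⟩, (hk (n+1) le_rfl).symm, (hk n (by omega)).symm⟩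

lemma walk_up {a : TV m ℓ} {i : Fin m} (ha : a ≠ vy) :
    ∀ d j (hj : j < ℓ i - 1), ℓ i - 2 - j = d →
      (∀ k (hk : k < ℓ i - 1), j ≤ k → a ≠ vi i ⟨k, hk⟩) →
      ChainAvoid a (vi i ⟨j, hj⟩) vy := by
  intro d
  induction d with
  | zero =>
    intro j hj hd hk
    have hje : (j : ℕ) = ℓ i - 2 := by omega
    exact Relation.ReflTransGen.single
      ⟨(adj_yv.mpr hje).symm, (hk j hj le_rfl).symm, ha.symm⟩
  | succ n ih =>
    intro j hj hd hk
    have hj1 : j + 1 < ℓ i - 1 := by omega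
    refine Relation.ReflTransGen.head ?_
      (ih (j+1) hj1 (by omega) (fun k hk' hk'' => hk k hk' (by omega)))
    exact ⟨adj_vv.mpr ⟨rfl, Or.inl rfl⟩, (hk j hj le_rfl).symm, (hk (j+1) hj1 (by omega)).symm⟩

lemma x_to_y (hm : 2 ≤ m) (hpos : ∀ i, 1 ≤ ℓ i) {a : TV m ℓ}
    (hax : a ≠ vx) (hay : a ≠ vy) : ChainAvoid a vx vy := by
  -- choose a path avoiding a
  have : ∃ i : Fin m, ∀ j, a ≠ vi i j := by
    match a with
    | none => exact absurd rfl hax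
    | some none => exact absurd rfl hay
    | some (some ⟨i0, j0⟩) =>
      have h2 : 1 < Fintype.card (Fin m) := by simp; omega
      obtain ⟨i, hi⟩ := Fintype.exists_ne_of_one_lt_card h2 i0
      exact ⟨i, fun j h => by simp [vi] at h; exact hi h.1.symm⟩
  obtain ⟨i, hi⟩ := this
  rcases Nat.lt_or_ge (ℓ i) 2 with h1 | h2
  · have : ℓ i = 1 := by have := hpos i; omega
    exact Relation.ReflTransGen.single ⟨adj_xy.mpr ⟨i, this⟩, hax.symm, hay.symm⟩
  · have h0 : 0 < ℓ i - 1 := by omega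
    refine Relation.ReflTransGen.head (b := vi i ⟨0, h0⟩)
      ⟨adj_xv.mpr rfl, hax.symm, (hi _).symm⟩ ?_
    exact walk_up hay (ℓ i - 2 - 0) 0 h0 rfl (fun k hk _ => hi _)

lemma conn (hm : 2 ≤ m) (hpos : ∀ i, 1 ≤ ℓ i) {a s t : TV m ℓ}
    (hs : s ≠ a) (ht : t ≠ a) : ChainAvoid a s t := by
  by_cases hax : a = vx
  · subst hax
    have key : ∀ u : TV m ℓ, u ≠ vx → ChainAvoid vx u vy := by
      intro u hu
      match u with
      | none => exact absurd rfl hu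
      | some none => exact Relation.ReflTransGen.refl
      | some (some ⟨i, j⟩) =>
        have := walk_up (a := vx) (i := i) vx_ne_vy (ℓ i - 2 - j) j j.isLt rfl
          (fun k hk _ => vx_ne_vi)
        simpa [vi] using this
    exact (key s hs).trans (chainAvoid_symm (key t ht))
  · have key : ∀ u : TV m ℓ, u ≠ a → ChainAvoid a u vx := by
      intro u hu
      match u with
      | none => exact Relation.ReflTransGen.refl
      | some none =>
        exact chainAvoid_symm (x_to_y hm hpos hax (Ne.symm hu))
      | some (some ⟨i, j⟩) =>
        by_cases hlow : ∀ k (hk : k ≤ (j : ℕ)), a ≠ vi i ⟨k, lt_of_le_of_lt hk j.isLt⟩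
        · have := walk_down hax (j : ℕ) j.isLt hlow
          simpa [vi] using this
        · push_neg at hlow
          obtain ⟨k, hkle, hak⟩ := hlow
          have hkj : k < (j : ℕ) := by
            rcases Nat.lt_or_ge k (j : ℕ) with h | h
            · exact h
            · exact absurd (hak.trans (vi_eq_iff.mpr ⟨rfl, by simp; omega⟩).symm).symm hu
          have hay : a ≠ vy := by rw [hak]; exact vy_ne_vi.symm
          have hup := walk_up (a := a) (i := i) hay (ℓ i - 2 - j) (j : ℕ) j.isLt rfl
            (fun k' hk' hk'' => by
              rw [hak]
              simp only [ne_eq, vi_eq_iff, Fin.val_mk]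
              rintro ⟨-, h2⟩
              omega)
          have hchain : ChainAvoid a (vi i j) vy := by simpa using hup
          exact hchain.trans (chainAvoid_symm (x_to_y hm hpos hax hay))
    exact (key s hs).trans (chainAvoid_symm (key t ht))

lemma chain_stay {P : TV m ℓ → Prop} {a s t : TV m ℓ} (h : ChainAvoid a s t) (hs : P s)
    (hstep : ∀ c d, P c → StepAvoid a c d → P d) : P t := by
  induction h with
  | refl => exact hs
  | tail h1 h2 ih => exact hstep _ _ ih h2

lemma exists_pair_core (hm : 2 ≤ m) (hpos : ∀ i, 1 ≤ ℓ i)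
    {A B A' B' : Set (TV m ℓ)} (hU : A ∪ B = Set.univ) (hd : Disjoint A B)
    (hA2 : 2 ≤ A.ncard) (hB2 : 2 ≤ B.ncard) (hA' : A' ⊆ A) (hB' : B' ⊆ B)
    (hadj : ∀ x ∈ A, ∀ y ∈ B, ((thetaGraph m ℓ).Adj x y ↔ (x ∈ A' ∧ y ∈ B'))) :
    ∃ a1 ∈ A', ∃ a2 ∈ A', a1 ≠ a2 := by
  by_contra hcon
  push_neg at hcon
  obtain ⟨b1, hb1, b2, hb2, hbne⟩ := (Set.one_lt_ncard (Set.toFinite B)).mp (by omega)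
  obtain ⟨u1, hu1, u2, hu2, hune⟩ := (Set.one_lt_ncard (Set.toFinite A)).mp (by omega)
  have hmemAB : ∀ t : TV m ℓ, t ∈ A ∨ t ∈ B := by
    intro t
    have : t ∈ A ∪ B := hU ▸ Set.mem_univ t
    exact this
  rcases Set.eq_empty_or_nonempty A' with hAe | ⟨a, haA'⟩
  · -- no cross edges at all; walk from u1 to b1 avoiding b2
    have hinv : ∀ t, ChainAvoid b2 u1 t → t ∈ A := by
      intro t hch
      refine chain_stay hch hu1 (fun c d hc hstep => ?_)
      rcases hmemAB d with h | h
      · exact h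
      · exact absurd (((hadj c hc d h).mp hstep.1).1) (by simp [hAe])
    have : b1 ∈ A := hinv b1
      (conn hm hpos (fun h => Set.disjoint_left.mp hd (h ▸ hu1) hb2) hbne)
    exact Set.disjoint_left.mp hd this hb1
  · -- A' = {a}
    have ha : a ∈ A := hA' haA'
    obtain ⟨u, huA, hua⟩ : ∃ u ∈ A, u ≠ a := by
      by_cases h : u1 = a
      · exact ⟨u2, hu2, by rw [← h]; exact hune.symm⟩
      · exact ⟨u1, hu1, h⟩
    have hinv : ∀ t, ChainAvoid a u t → t ∈ A := by
      intro t hch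
      refine chain_stay hch huA (fun c d hc hstep => ?_)
      rcases hmemAB d with h | h
      · exact h
      · exact absurd (hcon c ((hadj c hc d h).mp hstep.1).1 a haA') hstep.2.1
    have : b1 ∈ A := hinv b1
      (conn hm hpos hua (fun h => Set.disjoint_left.mp hd (h ▸ ha) hb1))
    exact Set.disjoint_left.mp hd this hb1

lemma sigma_eq_of {p q : (i : Fin m) × Fin (ℓ i - 1)} (h1 : p.1 = q.1)
    (h2 : (p.2 : ℕ) = (q.2 : ℕ)) : p = q := by
  rcases p with ⟨i, j⟩; rcases q with ⟨i', j'⟩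
  cases h1
  exact congrArg _ (Fin.ext h2)

lemma ell_ge_two {i : Fin m} (j : Fin (ℓ i - 1)) : 2 ≤ ℓ i := by
  have := j.isLt; omega

/-- A common neighbour of `vx` and an internal vertex. -/
lemma common_x {p : (i : Fin m) × Fin (ℓ i - 1)} {b : TV m ℓ}
    (h1 : (thetaGraph m ℓ).Adj vx b) (h3 : (thetaGraph m ℓ).Adj (vi p.1 p.2) b) :
    (b = vy ∧ (p.2 : ℕ) = ℓ p.1 - 2) ∨
      (∃ h0 : 0 < ℓ p.1 - 1, b = vi p.1 ⟨0, h0⟩ ∧ (p.2 : ℕ) = 1) := by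
  rcases nbr_x h1 with rfl | ⟨i, j, rfl, hj0⟩
  · rcases nbr_v h3 with ⟨h, _⟩ | ⟨h, hp⟩ | ⟨j', h, _⟩
    · exact absurd h vx_ne_vy.symm
    · exact Or.inl ⟨rfl, hp⟩
    · exact absurd h vy_ne_vi
  · rcases nbr_v h3 with ⟨h, _⟩ | ⟨h, _⟩ | ⟨j', h, hj'⟩
    · exact absurd h.symm vx_ne_vi
    · exact absurd h.symm vy_ne_vi
    · obtain ⟨hi, hjj'⟩ := vi_eq_iff.mp h
      have h0 : 0 < ℓ p.1 - 1 := hi ▸ j.pos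
      exact Or.inr ⟨h0, vi_eq_iff.mpr ⟨hi, by simpa using hj0⟩, by omega⟩

/-- A common neighbour of `vy` and an internal vertex. -/
lemma common_y {p : (i : Fin m) × Fin (ℓ i - 1)} {b : TV m ℓ}
    (h1 : (thetaGraph m ℓ).Adj vy b) (h3 : (thetaGraph m ℓ).Adj (vi p.1 p.2) b) :
    (b = vx ∧ (p.2 : ℕ) = 0) ∨
      (∃ h0 : (p.2 : ℕ) + 1 < ℓ p.1 - 1, b = vi p.1 ⟨(p.2 : ℕ) + 1, h0⟩ ∧
        (p.2 : ℕ) + 1 = ℓ p.1 - 2) := by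
  rcases nbr_y h1 with rfl | ⟨i, j, rfl, hj0⟩
  · rcases nbr_v h3 with ⟨_, hp⟩ | ⟨h, _⟩ | ⟨j', h, _⟩
    · exact Or.inl ⟨rfl, hp⟩
    · exact absurd h vx_ne_vy
    · exact absurd h vx_ne_vi
  · rcases nbr_v h3 with ⟨h, _⟩ | ⟨h, _⟩ | ⟨j', h, hj'⟩
    · exact absurd h.symm vx_ne_vi
    · exact absurd h.symm vy_ne_vi
    · obtain ⟨hi, hjj'⟩ := vi_eq_iff.mp h
      have hlt := p.2.isLt
      have hlt' : (j : ℕ) < ℓ p.1 - 1 := hi ▸ j.isLt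
      have hll : ℓ i = ℓ p.1 := by rw [hi]
      have hge : 2 ≤ ℓ p.1 := ell_ge_two p.2
      have he : (j : ℕ) = (p.2 : ℕ) + 1 := by omega
      refine Or.inr ⟨by omega, vi_eq_iff.mpr ⟨hi, by simpa using he⟩, by omega⟩

/-- Two internal vertices cannot have two distinct common neighbours. -/
lemma no_two_internal (h2 : ∀ i j, ℓ i = 2 → ℓ j = 2 → i = j)
    {p q : (i : Fin m) × Fin (ℓ i - 1)} (hpq : p ≠ q) {b1 b2 : TV m ℓ} (hb : b1 ≠ b2)
    (h11 : (thetaGraph m ℓ).Adj (vi p.1 p.2) b1) (h12 : (thetaGraph m ℓ).Adj (vi p.1 p.2) b2)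
    (h21 : (thetaGraph m ℓ).Adj (vi q.1 q.2) b1) (h22 : (thetaGraph m ℓ).Adj (vi q.1 q.2) b2) :
    False := by
  have key : ∀ b : TV m ℓ, (thetaGraph m ℓ).Adj (vi p.1 p.2) b →
      (thetaGraph m ℓ).Adj (vi q.1 q.2) b →
      (b = vx ∧ (p.2 : ℕ) = 0 ∧ (q.2 : ℕ) = 0) ∨
      (b = vy ∧ (p.2 : ℕ) = ℓ p.1 - 2 ∧ (q.2 : ℕ) = ℓ q.1 - 2) ∨
      (p.1 = q.1 ∧ ∃ j' : Fin (ℓ p.1 - 1), b = vi p.1 j' ∧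
        ((j' : ℕ) = (p.2 : ℕ) + 1 ∨ (p.2 : ℕ) = (j' : ℕ) + 1) ∧
        ((j' : ℕ) = (q.2 : ℕ) + 1 ∨ (q.2 : ℕ) = (j' : ℕ) + 1)) := by
    intro b hp hq
    rcases nbr_v hp with ⟨rfl, hp0⟩ | ⟨rfl, hp0⟩ | ⟨j', rfl, hp0⟩
    · rcases nbr_v hq with ⟨_, hq0⟩ | ⟨h, _⟩ | ⟨j'', h, _⟩
      · exact Or.inl ⟨rfl, hp0, hq0⟩
      · exact absurd h vx_ne_vy
      · exact absurd h vx_ne_vi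
    · rcases nbr_v hq with ⟨h, _⟩ | ⟨_, hq0⟩ | ⟨j'', h, _⟩
      · exact absurd h vx_ne_vy.symm
      · exact Or.inr (Or.inl ⟨rfl, hp0, hq0⟩)
      · exact absurd h vy_ne_vi
    · rcases nbr_v hq with ⟨h, _⟩ | ⟨h, _⟩ | ⟨j'', h, hq0⟩
      · exact absurd h.symm vx_ne_vi
      · exact absurd h.symm vy_ne_vi
      · obtain ⟨hi, hjj'⟩ := vi_eq_iff.mp h
        exact Or.inr (Or.inr ⟨hi, j', rfl, hp0, by omega⟩)
  have hne : p.1 = q.1 → (p.2 : ℕ) ≠ (q.2 : ℕ) := fun h1 h2' => hpq (sigma_eq_of h1 h2')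
  rcases key b1 h11 h21 with ⟨rfl, c1, c2⟩ | ⟨rfl, c1, c2⟩ | ⟨hi, j1, rfl, c1, c2⟩ <;>
    rcases key b2 h12 h22 with ⟨he, d1, d2⟩ | ⟨he, d1, d2⟩ | ⟨hi', j2, he, d1, d2⟩
  · exact hb he.symm
  · have hp2 : ℓ p.1 = 2 := by have := ell_ge_two p.2; omega
    have hq2 : ℓ q.1 = 2 := by have := ell_ge_two q.2; omega
    exact hpq (sigma_eq_of (h2 _ _ hp2 hq2) (by omega))
  · exact hpq (sigma_eq_of hi' (by omega))
  · have hp2 : ℓ p.1 = 2 := by have := ell_ge_two p.2; omega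
    have hq2 : ℓ q.1 = 2 := by have := ell_ge_two q.2; omega
    exact hpq (sigma_eq_of (h2 _ _ hp2 hq2) (by omega))
  · exact hb he.symm
  · have hll : ℓ p.1 = ℓ q.1 := by rw [hi']
    exact hpq (sigma_eq_of hi' (by omega))
  · exact hpq (sigma_eq_of hi (by omega))
  · have hll : ℓ p.1 = ℓ q.1 := by rw [hi]
    exact hpq (sigma_eq_of hi (by omega))
  · have hj12 : (j1 : ℕ) ≠ (j2 : ℕ) := fun h =>
      hb ((he.trans (vi_eq_iff.mpr ⟨rfl, h.symm⟩)).symm)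
    have := hne hi
    omega

/-- Two hubs cannot have two distinct common neighbours. -/
lemma no_two_hubs (h2 : ∀ i j, ℓ i = 2 → ℓ j = 2 → i = j)
    {b1 b2 : TV m ℓ} (hb : b1 ≠ b2)
    (h11 : (thetaGraph m ℓ).Adj vx b1) (h12 : (thetaGraph m ℓ).Adj vx b2)
    (h21 : (thetaGraph m ℓ).Adj vy b1) (h22 : (thetaGraph m ℓ).Adj vy b2) :
    False := by
  have key : ∀ b : TV m ℓ, (thetaGraph m ℓ).Adj vx b → (thetaGraph m ℓ).Adj vy b →
      ∃ i, ∃ h0 : 0 < ℓ i - 1, b = vi i ⟨0, h0⟩ ∧ ℓ i = 2 := by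
    intro b hx hy
    rcases nbr_x hx with rfl | ⟨i, j, rfl, hj0⟩
    · exact absurd hy ((thetaGraph m ℓ).loopless.irrefl vy)
    · rcases nbr_y hy with h | ⟨i', j', h, hj'⟩
      · exact absurd h vx_ne_vi.symm
      · obtain ⟨hi, hjj'⟩ := vi_eq_iff.mp h
        subst hi
        have : ℓ i = 2 := by have := ell_ge_two j; omega
        exact ⟨i, j.pos, vi_eq_iff.mpr ⟨rfl, by simp [hj0]⟩, this⟩
  obtain ⟨i, h0, rfl, hi2⟩ := key b1 h11 h21
  obtain ⟨i', h0', he, hi2'⟩ := key b2 h12 h22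
  cases h2 _ _ hi2 hi2'
  exact hb (he.trans (vi_eq_iff.mpr ⟨rfl, rfl⟩)).symm

lemma helper_x {p : (i : Fin m) × Fin (ℓ i - 1)} {b1 b2 : TV m ℓ} (hb : b1 ≠ b2)
    (h11 : (thetaGraph m ℓ).Adj vx b1) (h12 : (thetaGraph m ℓ).Adj vx b2)
    (h21 : (thetaGraph m ℓ).Adj (vi p.1 p.2) b1)
    (h22 : (thetaGraph m ℓ).Adj (vi p.1 p.2) b2) :
    ℓ p.1 = 3 ∧ (p.2 : ℕ) = 1 ∧ ∃ h0 : 0 < ℓ p.1 - 1,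
      ((b1 = vy ∧ b2 = vi p.1 ⟨0, h0⟩) ∨ (b2 = vy ∧ b1 = vi p.1 ⟨0, h0⟩)) := by
  have hge := ell_ge_two p.2
  rcases common_x h11 h21 with ⟨he1, hc1⟩ | ⟨h0, he1, hc1⟩ <;>
    rcases common_x h12 h22 with ⟨he2, hc2⟩ | ⟨h0', he2, hc2⟩
  · exact absurd (he1.trans he2.symm) hb
  · exact ⟨by omega, by omega, h0', Or.inl ⟨he1, he2⟩⟩
  · exact ⟨by omega, by omega, h0, Or.inr ⟨he2, he1⟩⟩
  · exact absurd (he1.trans he2.symm) hb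

lemma helper_y {p : (i : Fin m) × Fin (ℓ i - 1)} {b1 b2 : TV m ℓ} (hb : b1 ≠ b2)
    (h11 : (thetaGraph m ℓ).Adj vy b1) (h12 : (thetaGraph m ℓ).Adj vy b2)
    (h21 : (thetaGraph m ℓ).Adj (vi p.1 p.2) b1)
    (h22 : (thetaGraph m ℓ).Adj (vi p.1 p.2) b2) :
    ℓ p.1 = 3 ∧ (p.2 : ℕ) = 0 ∧ ∃ h1 : 1 < ℓ p.1 - 1,
      ((b1 = vx ∧ b2 = vi p.1 ⟨1, h1⟩) ∨ (b2 = vx ∧ b1 = vi p.1 ⟨1, h1⟩)) := by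
  have hge := ell_ge_two p.2
  rcases common_y h11 h21 with ⟨he1, hc1⟩ | ⟨h0, he1, hc1⟩ <;>
    rcases common_y h12 h22 with ⟨he2, hc2⟩ | ⟨h0', he2, hc2⟩
  · exact absurd (he1.trans he2.symm) hb
  · have h3 : ℓ p.1 = 3 := by omega
    refine ⟨h3, hc1, by omega, Or.inl ⟨he1, he2.trans (vi_eq_iff.mpr ⟨rfl, by simp; omega⟩)⟩⟩
  · have h3 : ℓ p.1 = 3 := by omega
    refine ⟨h3, hc2, by omega, Or.inr ⟨he2, he1.trans (vi_eq_iff.mpr ⟨rfl, by simp; omega⟩)⟩⟩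
  · exact absurd (he1.trans he2.symm) hb

lemma classify (h2 : ∀ i j, ℓ i = 2 → ℓ j = 2 → i = j) {A' B' : Set (TV m ℓ)}
    {a1 a2 b1 b2 : TV m ℓ} (ha1 : a1 ∈ A') (ha2 : a2 ∈ A') (hb1 : b1 ∈ B') (hb2 : b2 ∈ B')
    (ha : a1 ≠ a2) (hb : b1 ≠ b2)
    (h11 : (thetaGraph m ℓ).Adj a1 b1) (h12 : (thetaGraph m ℓ).Adj a1 b2)
    (h21 : (thetaGraph m ℓ).Adj a2 b1) (h22 : (thetaGraph m ℓ).Adj a2 b2) :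
    ∃ i, ℓ i = 3 ∧ ∃ (h0 : 0 < ℓ i - 1) (h1 : 1 < ℓ i - 1),
      (vx ∈ A' ∧ vi i ⟨1, h1⟩ ∈ A' ∧ vy ∈ B' ∧ vi i ⟨0, h0⟩ ∈ B') ∨
      (vy ∈ A' ∧ vi i ⟨0, h0⟩ ∈ A' ∧ vx ∈ B' ∧ vi i ⟨1, h1⟩ ∈ B') := by
  match a1, a2 with
  | none, none => exact absurd rfl ha
  | some none, some none => exact absurd rfl ha
  | none, some none => exact absurd (no_two_hubs h2 hb h11 h12 h21 h22) id
  | some none, none => exact absurd (no_two_hubs h2 hb h21 h22 h11 h12) id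
  | some (some p), some (some q) =>
    exact absurd (no_two_internal h2 (fun h => ha (by rw [h])) hb h11 h12 h21 h22) id
  | none, some (some p) =>
    obtain ⟨h3, hp2, h0, hcase⟩ := helper_x hb h11 h12 h21 h22
    have h1 : 1 < ℓ p.1 - 1 := by omega
    have hpA : vi p.1 ⟨1, h1⟩ ∈ A' := by
      have : vi p.1 ⟨1, h1⟩ = vi p.1 p.2 := vi_eq_iff.mpr ⟨rfl, by simp [hp2]⟩
      rw [this]; exact ha2
    rcases hcase with ⟨hy, hv⟩ | ⟨hy, hv⟩
    · exact ⟨p.1, h3, h0, h1, Or.inl ⟨ha1, hpA, hy ▸ hb1, hv ▸ hb2⟩⟩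
    · exact ⟨p.1, h3, h0, h1, Or.inl ⟨ha1, hpA, hy ▸ hb2, hv ▸ hb1⟩⟩
  | some (some p), none =>
    obtain ⟨h3, hp2, h0, hcase⟩ := helper_x hb h21 h22 h11 h12
    have h1 : 1 < ℓ p.1 - 1 := by omega
    have hpA : vi p.1 ⟨1, h1⟩ ∈ A' := by
      have : vi p.1 ⟨1, h1⟩ = vi p.1 p.2 := vi_eq_iff.mpr ⟨rfl, by simp [hp2]⟩
      rw [this]; exact ha1
    rcases hcase with ⟨hy, hv⟩ | ⟨hy, hv⟩
    · exact ⟨p.1, h3, h0, h1, Or.inl ⟨ha2, hpA, hy ▸ hb1, hv ▸ hb2⟩⟩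
    · exact ⟨p.1, h3, h0, h1, Or.inl ⟨ha2, hpA, hy ▸ hb2, hv ▸ hb1⟩⟩
  | some none, some (some p) =>
    obtain ⟨h3, hp2, h1, hcase⟩ := helper_y hb h11 h12 h21 h22
    have h0 : 0 < ℓ p.1 - 1 := by omega
    have hpA : vi p.1 ⟨0, h0⟩ ∈ A' := by
      have : vi p.1 ⟨0, h0⟩ = vi p.1 p.2 := vi_eq_iff.mpr ⟨rfl, by simp [hp2]⟩
      rw [this]; exact ha2
    rcases hcase with ⟨hy, hv⟩ | ⟨hy, hv⟩
    · exact ⟨p.1, h3, h0, h1, Or.inr ⟨ha1, hpA, hy ▸ hb1, hv ▸ hb2⟩⟩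
    · exact ⟨p.1, h3, h0, h1, Or.inr ⟨ha1, hpA, hy ▸ hb2, hv ▸ hb1⟩⟩
  | some (some p), some none =>
    obtain ⟨h3, hp2, h1, hcase⟩ := helper_y hb h21 h22 h11 h12
    have h0 : 0 < ℓ p.1 - 1 := by omega
    have hpA : vi p.1 ⟨0, h0⟩ ∈ A' := by
      have : vi p.1 ⟨0, h0⟩ = vi p.1 p.2 := vi_eq_iff.mpr ⟨rfl, by simp [hp2]⟩
      rw [this]; exact ha1
    rcases hcase with ⟨hy, hv⟩ | ⟨hy, hv⟩
    · exact ⟨p.1, h3, h0, h1, Or.inr ⟨ha2, hpA, hy ▸ hb1, hv ▸ hb2⟩⟩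
    · exact ⟨p.1, h3, h0, h1, Or.inr ⟨ha2, hpA, hy ▸ hb2, hv ▸ hb1⟩⟩

lemma final_main {A B A' B' : Set (TV m ℓ)} (hU : A ∪ B = Set.univ)
    (hA' : A' ⊆ A) (hB' : B' ⊆ B)
    (hadj : ∀ x ∈ A, ∀ y ∈ B, ((thetaGraph m ℓ).Adj x y ↔ (x ∈ A' ∧ y ∈ B')))
    {i : Fin m} {h0 : 0 < ℓ i - 1} {h1 : 1 < ℓ i - 1}
    (hxA : vx ∈ A') (hvA : vi i ⟨1, h1⟩ ∈ A') (hyB : vy ∈ B') (hvB : vi i ⟨0, h0⟩ ∈ B')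
    {k : Fin m} (hki : k ≠ i) (hk2 : 2 ≤ ℓ k) : False := by
  have hmem : ∀ t : TV m ℓ, t ∈ A ∨ t ∈ B := fun t => by
    have : t ∈ A ∪ B := hU ▸ Set.mem_univ t
    exact this
  have cross : ∀ a' ∈ A', ∀ b' ∈ B', (thetaGraph m ℓ).Adj a' b' :=
    fun a' ha' b' hb' => (hadj a' (hA' ha') b' (hB' hb')).mpr ⟨ha', hb'⟩
  have claim : ∀ j (hj : j < ℓ k - 1), vi k ⟨j, hj⟩ ∈ A := by
    intro j
    induction j with
    | zero =>
      intro hj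
      by_contra hnB
      have hBmem : vi k ⟨0, hj⟩ ∈ B := (hmem _).resolve_left hnB
      have hx : (thetaGraph m ℓ).Adj vx (vi k ⟨0, hj⟩) := adj_xv.mpr rfl
      have hc := (hadj vx (hA' hxA) _ hBmem).mp hx
      have := (adj_vv.mp (cross _ hvA _ hc.2)).1
      exact hki this.symm
    | succ n ih =>
      intro hj
      have hn : n < ℓ k - 1 := by omega
      have hA : vi k ⟨n, hn⟩ ∈ A := ih hn
      by_contra hnB
      have hBmem : vi k ⟨n + 1, hj⟩ ∈ B := (hmem _).resolve_left hnB
      have hstep : (thetaGraph m ℓ).Adj (vi k ⟨n, hn⟩) (vi k ⟨n + 1, hj⟩) :=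
        adj_vv.mpr ⟨rfl, Or.inl rfl⟩
      have hc := (hadj _ hA _ hBmem).mp hstep
      have := adj_yv.mp (cross _ hc.1 vy hyB).symm
      simp at this
      omega
  have hjlast : ℓ k - 2 < ℓ k - 1 := by omega
  have hlast : vi k ⟨ℓ k - 2, hjlast⟩ ∈ A := claim _ hjlast
  have hadjl : (thetaGraph m ℓ).Adj (vi k ⟨ℓ k - 2, hjlast⟩) vy := (adj_yv.mpr rfl).symm
  have hc := (hadj _ hlast vy (hB' hyB)).mp hadjl
  have := (adj_vv.mp (cross _ hc.1 _ hvB)).1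
  exact hki this

lemma final_mirror {A B A' B' : Set (TV m ℓ)} (hU : A ∪ B = Set.univ)
    (hA' : A' ⊆ A) (hB' : B' ⊆ B)
    (hadj : ∀ x ∈ A, ∀ y ∈ B, ((thetaGraph m ℓ).Adj x y ↔ (x ∈ A' ∧ y ∈ B')))
    {i : Fin m} {h0 : 0 < ℓ i - 1} {h1 : 1 < ℓ i - 1}
    (hyA : vy ∈ A') (hvA : vi i ⟨0, h0⟩ ∈ A') (hxB : vx ∈ B') (hvB : vi i ⟨1, h1⟩ ∈ B')
    {k : Fin m} (hki : k ≠ i) (hk2 : 2 ≤ ℓ k) : False := by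
  have hmem : ∀ t : TV m ℓ, t ∈ A ∨ t ∈ B := fun t => by
    have : t ∈ A ∪ B := hU ▸ Set.mem_univ t
    exact this
  have cross : ∀ a' ∈ A', ∀ b' ∈ B', (thetaGraph m ℓ).Adj a' b' :=
    fun a' ha' b' hb' => (hadj a' (hA' ha') b' (hB' hb')).mpr ⟨ha', hb'⟩
  have claim : ∀ d j (hj : j < ℓ k - 1), ℓ k - 2 - j = d → vi k ⟨j, hj⟩ ∈ A := by
    intro d
    induction d with
    | zero =>
      intro j hj hd
      by_contra hnB
      have hBmem : vi k ⟨j, hj⟩ ∈ B := (hmem _).resolve_left hnB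
      have hy : (thetaGraph m ℓ).Adj vy (vi k ⟨j, hj⟩) := adj_yv.mpr (by simp; omega)
      have hc := (hadj vy (hA' hyA) _ hBmem).mp hy
      have := (adj_vv.mp (cross _ hvA _ hc.2)).1
      exact hki this.symm
    | succ n ih =>
      intro j hj hd
      have hj1 : j + 1 < ℓ k - 1 := by omega
      have hA : vi k ⟨j + 1, hj1⟩ ∈ A := ih (j + 1) hj1 (by omega)
      by_contra hnB
      have hBmem : vi k ⟨j, hj⟩ ∈ B := (hmem _).resolve_left hnB
      have hstep : (thetaGraph m ℓ).Adj (vi k ⟨j + 1, hj1⟩) (vi k ⟨j, hj⟩) :=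
        adj_vv.mpr ⟨rfl, Or.inr rfl⟩
      have hc := (hadj _ hA _ hBmem).mp hstep
      have := adj_xv.mp (cross _ hc.1 vx hxB).symm
      simp at this
  have h0k : (0 : ℕ) < ℓ k - 1 := by omega
  have hfirst : vi k ⟨0, h0k⟩ ∈ A := claim (ℓ k - 2) 0 h0k (by omega)
  have hadjf : (thetaGraph m ℓ).Adj (vi k ⟨0, h0k⟩) vx := (adj_xv.mpr rfl).symm
  have hc := (hadj _ hfirst vx (hB' hxB)).mp hadjf
  have := (adj_vv.mp (cross _ hc.1 _ hvB)).1
  exact hki this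

lemma exists_other_path (hsum : 3 ≤ ∑ i, (ℓ i - 1)) {i : Fin m} (h3 : ℓ i = 3) :
    ∃ k, k ≠ i ∧ 2 ≤ ℓ k := by
  by_contra hcon
  push_neg at hcon
  have hz : ∀ k ∈ Finset.univ.erase i, ℓ k - 1 = 0 := by
    intro k hk
    have := hcon k (Finset.mem_erase.mp hk).1
    omega
  have htot := Finset.add_sum_erase Finset.univ (fun k => ℓ k - 1) (Finset.mem_univ i)
  rw [Finset.sum_eq_zero hz] at htot
  simp only [add_zero] at htot
  rw [← htot] at hsum
  omega

end ThetaAux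

/-- θ(ℓ_1, …, ℓ_m) with m ≥ 2 and at least 5 vertices is prime iff at most one
of the lengths ℓ_i equals 2 (lengths are positive, with at most one equal to 1). -/
theorem thetaGraph_prime_iff (m : ℕ) (hm : 2 ≤ m) (ℓ : Fin m → ℕ)
    (hpos : ∀ i, 1 ≤ ℓ i) (hone : ∀ i j, ℓ i = 1 → ℓ j = 1 → i = j)
    (hcard : 5 ≤ Nat.card (Option (Option ((i : Fin m) × Fin (ℓ i - 1))))) :
    IsPrime (thetaGraph m ℓ) ↔ ∀ i j, ℓ i = 2 → ℓ j = 2 → i = j := by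
  classical
  constructor
  · -- prime → at most one length 2
    intro hprime i j hi hj
    by_contra hij
    apply hprime
    have h0i : 0 < ℓ i - 1 := by omega
    have h0j : 0 < ℓ j - 1 := by omega
    set u : ThetaAux.TV m ℓ := ThetaAux.vi i ⟨0, h0i⟩ with hu
    set w : ThetaAux.TV m ℓ := ThetaAux.vi j ⟨0, h0j⟩ with hw
    have huw : u ≠ w := fun h => hij (ThetaAux.vi_eq_iff.mp h).1
    have hcA : ({u, w} : Set (ThetaAux.TV m ℓ)).ncard = 2 := Set.ncard_pair huw
    refine ⟨{u, w}, {u, w}ᶜ, Set.union_compl_self _, disjoint_compl_right,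
      le_of_eq hcA.symm, ?_, {u, w}, {ThetaAux.vx, ThetaAux.vy}, le_refl _, ?_, ?_⟩
    · have h5 := Set.ncard_add_ncard_compl ({u, w} : Set (ThetaAux.TV m ℓ))
      have hre : Nat.card (ThetaAux.TV m ℓ) =
          Nat.card (Option (Option ((i : Fin m) × Fin (ℓ i - 1)))) := rfl
      omega
    · rintro t (rfl | rfl)
      · simp only [Set.mem_compl_iff, Set.mem_insert_iff, Set.mem_singleton_iff]
        push_neg
        exact ⟨ThetaAux.vx_ne_vi, ThetaAux.vx_ne_vi⟩
      · simp only [Set.mem_compl_iff, Set.mem_insert_iff, Set.mem_singleton_iff]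
        push_neg
        exact ⟨ThetaAux.vy_ne_vi, ThetaAux.vy_ne_vi⟩
    · intro s hs t ht
      have key : ∀ (r : Fin m) (h0r : 0 < ℓ r - 1), ℓ r = 2 →
          ((thetaGraph m ℓ).Adj (ThetaAux.vi r ⟨0, h0r⟩) t ↔
            t ∈ ({ThetaAux.vx, ThetaAux.vy} : Set (ThetaAux.TV m ℓ))) := by
        intro r h0r hr
        constructor
        · intro hadj
          rcases ThetaAux.nbr_v hadj with ⟨rfl, -⟩ | ⟨rfl, -⟩ | ⟨j', rfl, hcon⟩
          · exact Set.mem_insert _ _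
          · exact Set.mem_insert_of_mem _ rfl
          · have := j'.isLt
            simp only [Fin.val_mk] at hcon
            omega
        · rintro (rfl | rfl)
          · exact ((ThetaAux.adj_xv).mpr rfl).symm
          · exact ((ThetaAux.adj_yv).mpr (by simp [hr])).symm
      constructor
      · intro hadj
        rcases hs with rfl | rfl
        · exact ⟨Set.mem_insert _ _, (key i h0i hi).mp hadj⟩
        · exact ⟨Set.mem_insert_of_mem _ rfl, (key j h0j hj).mp hadj⟩
      · rintro ⟨-, ht'⟩
        rcases hs with rfl | rfl
        · exact (key i h0i hi).mpr ht'
        · exact (key j h0j hj).mpr ht'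
  · -- at most one length 2 → prime
    intro h2
    rintro ⟨A, B, hU, hd, hA2, hB2, A', B', hA', hB', hadj⟩
    obtain ⟨a1, ha1, a2, ha2, hane⟩ :=
      ThetaAux.exists_pair_core hm hpos hU hd hA2 hB2 hA' hB' hadj
    have hadj' : ∀ x ∈ B, ∀ y ∈ A, ((thetaGraph m ℓ).Adj x y ↔ (x ∈ B' ∧ y ∈ A')) := by
      intro b hb a ha
      rw [(thetaGraph m ℓ).adj_comm, hadj a ha b hb]
      exact and_comm
    obtain ⟨b1, hb1, b2, hb2, hbne⟩ := ThetaAux.exists_pair_core hm hpos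
      (by rw [Set.union_comm]; exact hU) hd.symm hB2 hA2 hB' hA' hadj'
    have cross : ∀ a' ∈ A', ∀ b' ∈ B', (thetaGraph m ℓ).Adj a' b' :=
      fun a' ha' b' hb' => (hadj a' (hA' ha') b' (hB' hb')).mpr ⟨ha', hb'⟩
    obtain ⟨i, h3, h0, h1, hcase⟩ := ThetaAux.classify h2 ha1 ha2 hb1 hb2 hane hbne
      (cross _ ha1 _ hb1) (cross _ ha1 _ hb2) (cross _ ha2 _ hb1) (cross _ ha2 _ hb2)
    have hsum : 3 ≤ ∑ i, (ℓ i - 1) := by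
      have heq : Nat.card (Option (Option ((i : Fin m) × Fin (ℓ i - 1)))) =
          ∑ i, (ℓ i - 1) + 2 := by
        simp [Nat.card_eq_fintype_card, Fintype.card_sigma]
      omega
    obtain ⟨k, hki, hk2⟩ := ThetaAux.exists_other_path hsum h3
    rcases hcase with ⟨hxA, hvA, hyB, hvB⟩ | ⟨hyA, hvA, hxB, hvB⟩
    · exact ThetaAux.final_main hU hA' hB' hadj hxA hvA hyB hvB hki hk2
    · exact ThetaAux.final_mirror hU hA' hB' hadj hyA hvA hxB hvB hki hk2
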